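/- Let m, n ≥ 0 be integers and let λ = (λ•, λ°) be an almost (m|n)-cross bipartition, i.e. λ•ₖ = 0 and λ°ₖ = 0 for all k > m+1, and λ•_{k+1} + λ°_{m−k+1} = n+1 for every integer 0 ≤ k ≤ m. Set δ = m − n. Then for every i ∈ I_∨(λ, δ) \ I_∧(λ) and every j ∈ I_∧(λ) \ I_∨(λ, δ) one has j < i; consequently there are no pairs (i, j) with i < j, i ∈ I_∨(λ, δ) \ I_∧(λ) and j ∈ I_∧(λ) \ I_∨(λ, δ) (the cap diagram of λ at parameter m − n has no caps). -/

import Mathlib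

/-! Partitions are encoded as antitone functions `f : ℕ → ℕ`, where `f k` is the
`(k+1)`-st part (indices shifted by one compared to the usual one-based convention). -/

/-- `I_∧(λ) = { λ•ₖ − k + 1 : k ≥ 1 }` for the partition `λ•` encoded by `f`
(with `f k = λ•_{k+1}` this is `{ f k − k : k ∈ ℕ }`). -/
def wedgeSet (f : ℕ → ℕ) : Set ℤ :=
  {x | ∃ k : ℕ, x = (f k : ℤ) - k}

/-- `I_∨(λ, δ) = { k − δ − λ°ₖ : k ≥ 1 }` for the partition `λ°` encoded by `g`
(with `g k = λ°_{k+1}` this is `{ (k+1) − δ − g k : k ∈ ℕ }`). -/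
def veeSet (δ : ℤ) (g : ℕ → ℕ) : Set ℤ :=
  {x | ∃ k : ℕ, x = ((k : ℤ) + 1) - δ - g k}

/-- if `λ = (λ•, λ°)` is an almost `(m|n)`-cross bipartition (all parts
beyond the `(m+1)`-st vanish and `λ•_{k+1} + λ°_{m−k+1} = n+1` for `0 ≤ k ≤ m`), then at
the parameter `δ = m − n` every element `j` of `I_∧(λ) \ I_∨(λ,δ)` is smaller than every
element `i` of `I_∨(λ,δ) \ I_∧(λ)`; consequently there are no `∨∧`-pairs `(i, j)` with
`i < j`, i.e. the cap diagram of `λ` has no caps. -/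
theorem almost_cross_no_caps
    (m n : ℕ) (lb lw : ℕ → ℕ)
    (hlb : Antitone lb) (hlw : Antitone lw)
    (hb0 : ∀ k, m + 1 ≤ k → lb k = 0) (hw0 : ∀ k, m + 1 ≤ k → lw k = 0)
    (hcross : ∀ k, k ≤ m → lb k + lw (m - k) = n + 1) :
    (∀ i ∈ veeSet ((m : ℤ) - n) lw \ wedgeSet lb,
      ∀ j ∈ wedgeSet lb \ veeSet ((m : ℤ) - n) lw, j < i) ∧
    ¬ ∃ i j : ℤ, i < j ∧ i ∈ veeSet ((m : ℤ) - n) lw \ wedgeSet lb ∧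
      j ∈ wedgeSet lb \ veeSet ((m : ℤ) - n) lw := by
  have main : ∀ i ∈ veeSet ((m : ℤ) - n) lw \ wedgeSet lb,
      ∀ j ∈ wedgeSet lb \ veeSet ((m : ℤ) - n) lw, j < i := by
    rintro i ⟨⟨k, hk⟩, hiw⟩ j ⟨⟨l, hl⟩, hjv⟩
    have hi : (n : ℤ) + 2 ≤ i := by
      rcases le_or_gt k m with hkm | hkm
      · exfalso
        apply hiw
        refine ⟨m - k, ?_⟩
        have h1 := hcross (m - k) (Nat.sub_le m k)
        rw [Nat.sub_sub_self hkm] at h1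
        omega
      · have := hw0 k (by omega)
        omega
    have hj : j ≤ -((m : ℤ) + 1) := by
      rcases le_or_gt l m with hlm | hlm
      · exfalso
        apply hjv
        refine ⟨m - l, ?_⟩
        have h1 := hcross l hlm
        omega
      · have := hb0 l (by omega)
        omega
    omega
  refine ⟨main, ?_⟩
  rintro ⟨i, j, hij, hi, hj⟩
  have := main i hi j hj
  omega
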